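/- Let R be a commutative ring, ε ∈ R with ε² = 1, S an associative R-algebra, and Q₀, Q₁, Q₂, Q₃ ∈ S satisfying the A1_ε relations. With b₁ = ε, b₂ = b₃ = 1 and structure constants f(1,2,3) = f(2,1,3) = 1, f(2,3,1) = f(3,2,1) = ε, f(3,1,2) = f(1,3,2) = 1, and f(i,j,k) = 0 for all other (i,j,k) ∈ {1,2,3}³, one has for every i ∈ {1,2,3}: Σ_{j,k∈{1,2,3}} b_j · f(i,j,k) · Q_k · Q_j = ε · Q_i. -/

import Mathlib

/-- The diagonal entries `b₁ = ε, b₂ = b₃ = 1` of the inverse bilinear form of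
`A1_ε`, restricted to the odd indices `{1,2,3}` (modelled by `Fin 3`, where
`0 ↔ 1`, `1 ↔ 2`, `2 ↔ 3`). -/
def bOdd {R : Type*} [CommRing R] (ε : R) : Fin 3 → R := ![ε, 1, 1]

/-- The structure constants of `A1_ε` on the odd indices `{1,2,3}` (modelled by
`Fin 3`): `f(1,2,3) = f(2,1,3) = 1`, `f(2,3,1) = f(3,2,1) = ε`,
`f(3,1,2) = f(1,3,2) = 1`, and `0` otherwise. -/
def fOdd {R : Type*} [CommRing R] (ε : R) (i j k : Fin 3) : R :=
  if i ≠ j ∧ j ≠ k ∧ i ≠ k then (if k = 0 then ε else 1) else 0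

/-- **Value of the one-trivalent-vertex Jacobi diagram (Proposition 4.1 core).**
For `Q₀, Q₁, Q₂, Q₃` satisfying the `A1_ε` relations (here `Q i` for `i : Fin 3`
denotes `Q_{i+1}`), for every `i`: `Σ_{j,k} b_j·f(i,j,k)·Q_k·Q_j = ε·Q_i`. -/
theorem A1eps_one_vertex
    {R : Type*} [CommRing R] {S : Type*} [Ring S] [Algebra R S]
    (ε : R) (hε : ε ^ 2 = 1)
    (Q0 : S) (Q : Fin 3 → S)
    (h01 : Q0 * Q 0 = Q 0 * Q0)
    (h02 : Q0 * Q 1 = Q 1 * Q0)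
    (h03 : Q0 * Q 2 = Q 2 * Q0)
    (h12 : Q 0 * Q 1 + Q 1 * Q 0 = Q 2)
    (h23 : Q 1 * Q 2 + Q 2 * Q 1 = ε • Q 0)
    (h31 : Q 2 * Q 0 + Q 0 * Q 2 = Q 1) :
    ∀ i : Fin 3,
      (∑ j : Fin 3, ∑ k : Fin 3, (bOdd ε j * fOdd ε i j k) • (Q k * Q j))
        = ε • Q i := by
  intro i
  fin_cases i <;> simp [fOdd, bOdd, Fin.sum_univ_three] <;>
    first
      | rw [add_comm (Q 2 * Q 1), h23]
      | (rw [← smul_add]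
         first
           | rw [h31]
           | rw [add_comm (Q 1 * Q 0), h12]
           | rw [add_comm (Q 2 * Q 0), h31]
           | rw [h12])
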